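/- Consider a timed automaton as a set of locations with a single clock, where every cycle in the location graph contains an edge whose guard requires the clock to be at least a strictly positive constant e and which resets the clock. Then every infinite run that visits infinitely many edges which lie on cycles takes infinite total time; in particular, no Zeno run (infinitely many discrete transitions in finite total time) exists if every edge belongs to some cycle with such a guard-and-reset. -/

import Mathlib

open scoped NNReal

/-- A finite directed graph of locations: finitely many vertices and edges. -/
structure FinDigraph where
  V : Type
  E : Type
  finV : Fintype V
  finE : Fintype E
  src : E → V
  tgt : E → V

/-- A nonempty closed walk (cycle) of length `n`: consecutive edges compose cyclically. -/
def FinDigraph.IsClosedWalk (G : FinDigraph) {n : ℕ} (hn : 0 < n) (c : Fin n → G.E) : Prop :=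
  ∀ i : Fin n, G.tgt (c i) = G.src (c ⟨(i.val + 1) % n, Nat.mod_lt _ hn⟩)

/-- An infinite walk through the location graph. -/
def FinDigraph.IsInfWalk (G : FinDigraph) (w : ℕ → G.E) : Prop :=
  ∀ n, G.tgt (w n) = G.src (w (n + 1))

/-- An infinite run of a one-clock timed automaton along the infinite walk `w`,
alternating delays `d` and discrete steps.  `c n` is the clock value when edge `w n`
is taken (after the delay `d n`); edges in `R` carry the guard `x ≥ e` and reset the clock. -/
structure IsRun (G : FinDigraph) (R : Set G.E) (e : ℝ≥0)
    (w : ℕ → G.E) (d : ℕ → ℝ≥0) (c : ℕ → ℝ≥0) : Prop where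
  walk : G.IsInfWalk w
  init : c 0 = d 0
  step_reset : ∀ n, w n ∈ R → c (n + 1) = d (n + 1)
  step_noreset : ∀ n, w n ∉ R → c (n + 1) = c n + d (n + 1)
  guard : ∀ n, w n ∈ R → e ≤ c n

/-- Extracting a cycle from a segment of an infinite walk between two occurrences of the
same edge. -/
lemma aux_exists_reset (G : FinDigraph) (R : Set G.E) (e : ℝ≥0)
    (hcyc : ∀ (n : ℕ) (hn : 0 < n) (cyc : Fin n → G.E),
      G.IsClosedWalk hn cyc → ∃ i : Fin n, cyc i ∈ R)
    (w : ℕ → G.E) (hw : G.IsInfWalk w) :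
    ∀ N : ℕ, ∃ n : ℕ, N ≤ n ∧ w n ∈ R := by
  intro N
  haveI : Fintype G.E := G.finE
  have key : ∀ i j : ℕ, i < j → w (N + i) = w (N + j) → ∃ n : ℕ, N ≤ n ∧ w n ∈ R := by
    intro i j hij heq
    set m : ℕ := j - i with hm
    have hm0 : 0 < m := by omega
    set cyc : Fin m → G.E := fun k => w (N + i + k.val) with hcycdef
    have hclosed : G.IsClosedWalk hm0 cyc := by
      intro k
      have hwalk := hw (N + i + k.val)
      by_cases hk1 : k.val + 1 < m
      · have : (k.val + 1) % m = k.val + 1 := Nat.mod_eq_of_lt hk1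
        simp only [hcycdef, this]
        have h3 : N + i + (k.val + 1) = N + i + k.val + 1 := by omega
        rw [h3]; exact hwalk
      · have hkm : k.val + 1 = m := by have := k.isLt; omega
        have : (k.val + 1) % m = 0 := by rw [hkm]; exact Nat.mod_self m
        simp only [hcycdef, this]
        have h2 : N + i + k.val + 1 = N + j := by omega
        rw [hwalk, h2, ← heq]
        norm_num
    obtain ⟨k, hk⟩ := hcyc m hm0 cyc hclosed
    exact ⟨N + i + k.val, by omega, hk⟩
  obtain ⟨i, j, hne, heq⟩ := Fintype.exists_ne_map_eq_of_card_lt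
    (fun k : Fin (Fintype.card G.E + 1) => w (N + k.val)) (by simp)
  rcases Ne.lt_or_gt hne with h | h
  · exact key i.val j.val h heq
  · exact key j.val i.val h heq.symm

/-- Clock bound after a reset. -/
lemma aux_clock_bound (G : FinDigraph) (R : Set G.E) (e : ℝ≥0)
    (w : ℕ → G.E) (d : ℕ → ℝ≥0) (c : ℕ → ℝ≥0)
    (hrun : IsRun G R e w d c) (j : ℕ) (hj : w j ∈ R) :
    ∀ m : ℕ, c (j + 1 + m) ≤ ∑ k ∈ Finset.Ico (j + 1) (j + 2 + m), d k := by
  intro m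
  induction m with
  | zero =>
      have h1 : c (j + 1) = d (j + 1) := hrun.step_reset j hj
      have h2 : ∑ k ∈ Finset.Ico (j + 1) (j + 2), d k = d (j + 1) := by
        rw [show j + 2 = (j + 1) + 1 from rfl, Finset.sum_Ico_succ_top le_rfl]
        simp
      simpa [h2] using h1.le
  | succ m ih =>
      have hsum : ∑ k ∈ Finset.Ico (j + 1) (j + 2 + (m + 1)), d k
          = ∑ k ∈ Finset.Ico (j + 1) (j + 2 + m), d k + d (j + 2 + m) := by
        rw [show j + 2 + (m + 1) = (j + 2 + m) + 1 by ring, Finset.sum_Ico_succ_top (by omega)]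
      have hidx : j + 1 + (m + 1) = (j + 1 + m) + 1 := by ring
      by_cases hr : w (j + 1 + m) ∈ R
      · have := hrun.step_reset (j + 1 + m) hr
        rw [hidx, this, hsum]
        have : (j + 1 + m) + 1 = j + 2 + m := by ring
        rw [this]
        exact le_add_left le_rfl
      · have := hrun.step_noreset (j + 1 + m) hr
        rw [hidx, this, hsum]
        have h3 : (j + 1 + m) + 1 = j + 2 + m := by ring
        rw [h3]
        exact add_le_add_left ih _
  
/-- Every cycle contains a guard-and-reset edge (guard `x ≥ e` with `e > 0`, resetting the
clock), and every edge belongs to some cycle.  Then the total time of any infinite run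
diverges: no Zeno run exists. -/
theorem stmt3 (G : FinDigraph) (R : Set G.E) (e : ℝ≥0) (he : 0 < e)
    (hcyc : ∀ (n : ℕ) (hn : 0 < n) (cyc : Fin n → G.E),
      G.IsClosedWalk hn cyc → ∃ i : Fin n, cyc i ∈ R)
    (hedge : ∀ a : G.E, ∃ (n : ℕ) (hn : 0 < n) (cyc : Fin n → G.E),
      G.IsClosedWalk hn cyc ∧ ∃ i : Fin n, cyc i = a)
    (w : ℕ → G.E) (d : ℕ → ℝ≥0) (c : ℕ → ℝ≥0)
    (hrun : IsRun G R e w d c) :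
    ∀ C : ℝ≥0, ∃ N : ℕ, C < ∑ k ∈ Finset.range N, d k := by
  have hreset := aux_exists_reset G R e hcyc w hrun.walk
  have main : ∀ m : ℕ, ∃ N : ℕ, (m : ℝ≥0) * e ≤ ∑ k ∈ Finset.range N, d k := by
    intro m
    induction m with
    | zero => exact ⟨0, by simp⟩
    | succ m ih =>
        obtain ⟨N, hN⟩ := ih
        obtain ⟨n1, hn1N, hn1R⟩ := hreset N
        obtain ⟨n2, hn21, hn2R⟩ := hreset (n1 + 1)
        have hce : e ≤ c n2 := hrun.guard n2 hn2R
        have hcb : c n2 ≤ ∑ k ∈ Finset.Ico (n1 + 1) (n2 + 1), d k := by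
          have := aux_clock_bound G R e w d c hrun n1 hn1R (n2 - (n1 + 1))
          have h1 : n1 + 1 + (n2 - (n1 + 1)) = n2 := by omega
          have h2 : n1 + 2 + (n2 - (n1 + 1)) = n2 + 1 := by omega
          rwa [h1, h2] at this
        refine ⟨n2 + 1, ?_⟩
        have hsplit : ∑ k ∈ Finset.range (n2 + 1), d k
            = ∑ k ∈ Finset.range N, d k + ∑ k ∈ Finset.Ico N (n2 + 1), d k := by
          rw [Finset.range_eq_Ico, Finset.range_eq_Ico]
          exact (Finset.sum_Ico_consecutive d (k := n2 + 1) (Nat.zero_le N) (by omega)).symm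
        have hsub : ∑ k ∈ Finset.Ico (n1 + 1) (n2 + 1), d k
            ≤ ∑ k ∈ Finset.Ico N (n2 + 1), d k :=
          Finset.sum_le_sum_of_subset (Finset.Ico_subset_Ico (by omega) le_rfl)
        calc ((m + 1 : ℕ) : ℝ≥0) * e = (m : ℝ≥0) * e + e := by push_cast; ring
          _ ≤ ∑ k ∈ Finset.range N, d k + ∑ k ∈ Finset.Ico N (n2 + 1), d k :=
              add_le_add hN (hce.trans (hcb.trans hsub))
          _ = ∑ k ∈ Finset.range (n2 + 1), d k := hsplit.symm
  intro C
  obtain ⟨m, hm⟩ := exists_nat_gt (C / e)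
  obtain ⟨N, hN⟩ := main m
  refine ⟨N, lt_of_lt_of_le ?_ hN⟩
  rw [div_lt_iff₀ he] at hm; exact hm
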